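/- arXiv:1804.02738 — 2 statements merged into one kernel-verified Lean document; each statement's English description precedes it below -/
import Mathlib

section
/- Let σ ∈ (1,2), c > 0, and let Φ_c be the complex endpoint soliton of gDNLS. Then -2σ·Im∫_ℝ |Φ_c|^{2σ}Φ_c ∂ₓΦ̄_c dx = -2σ(2-σ)c² M(Φ_c) < 0. -/
open MeasureTheory Complex

noncomputable def phi (σ c x : ℝ) : ℝ :=
  (2*c*(σ+1) / (σ^2 * (c*x)^2 + 1)) ^ (1/(2*σ))

noncomputable def Phi (σ c : ℝ) (x : ℝ) : ℂ :=
  (phi σ c x : ℂ) *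
    Complex.exp (Complex.I * ((c/2) * x : ℝ)
      - (Complex.I / (2*σ + 2)) * ((∫ y in Set.Iio x, (phi σ c y) ^ (2*σ) : ℝ) : ℂ))

noncomputable def Mass (σ c : ℝ) : ℝ := (1/2) * ∫ x : ℝ, ‖Phi σ c x‖^2

open Set Filter


lemma integrable_base {p : ℝ} (hp : 1/2 < p) :
    Integrable (fun x : ℝ => (1 + x^2) ^ (-p)) := by
  have h := integrable_rpow_neg_one_add_norm_sq (E := ℝ) (μ := volume) (r := 2*p)
    (by simp; linarith)
  have : ∀ x : ℝ, ((1:ℝ) + ‖x‖ ^ 2) ^ (-(2*p) / 2) = (1 + x^2) ^ (-p) := by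
    intro x
    rw [Real.norm_eq_abs, _root_.sq_abs]
    congr 1
    ring
  simpa only [this] using h

lemma integrable_g {b p : ℝ} (hb : 0 < b) (hp : 1/2 < p) :
    Integrable (fun x : ℝ => (b*x^2+1) ^ (-p)) := by
  have hm0 : 0 < min b 1 := lt_min hb one_pos
  have hQ : ∀ x : ℝ, 0 < b*x^2+1 := fun x => by positivity
  refine ((integrable_base hp).const_mul (min b 1 ^ (-p))).mono' ?_ ?_
  · refine Continuous.aestronglyMeasurable ?_
    exact (by continuity : Continuous fun x : ℝ => b*x^2+1).rpow_const
      (fun x => Or.inl (hQ x).ne')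
  · filter_upwards with x
    rw [Real.norm_eq_abs, _root_.abs_of_nonneg (Real.rpow_nonneg (hQ x).le _)]
    have h1 : min b 1 * (1 + x^2) ≤ b*x^2+1 := by
      have h2 : min b 1 ≤ b := min_le_left _ _
      have h3 : min b 1 ≤ 1 := min_le_right _ _
      nlinarith [sq_nonneg x]
    calc (b*x^2+1) ^ (-p) ≤ (min b 1 * (1 + x^2)) ^ (-p) :=
        Real.rpow_le_rpow_of_nonpos (by positivity) h1 (by linarith)
      _ = min b 1 ^ (-p) * (1 + x^2) ^ (-p) :=
        Real.mul_rpow hm0.le (by positivity)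

lemma integrable_xg {b q : ℝ} (hb : 0 < b) (hq : 1 < q) :
    Integrable (fun x : ℝ => x * (b*x^2+1) ^ (-q)) := by
  have hm0 : 0 < min b 1 := lt_min hb one_pos
  have hQ : ∀ x : ℝ, 0 < b*x^2+1 := fun x => by positivity
  have hp' : 1/2 < q - 1/2 := by linarith
  refine ((integrable_base hp').const_mul (min b 1 ^ (-q))).mono' ?_ ?_
  · refine Continuous.aestronglyMeasurable ?_
    exact continuous_id.mul ((by continuity : Continuous fun x : ℝ => b*x^2+1).rpow_const
      (fun x => Or.inl (hQ x).ne'))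
  · filter_upwards with x
    rw [Real.norm_eq_abs, _root_.abs_mul, _root_.abs_of_nonneg (Real.rpow_nonneg (hQ x).le _)]
    have habs : |x| ≤ (1 + x^2) ^ ((1:ℝ)/2) := by
      calc |x| = Real.sqrt (x^2) := (Real.sqrt_sq_eq_abs x).symm
        _ ≤ Real.sqrt (1+x^2) := Real.sqrt_le_sqrt (by linarith)
        _ = (1+x^2) ^ ((1:ℝ)/2) := Real.sqrt_eq_rpow _
    have h1 : min b 1 * (1 + x^2) ≤ b*x^2+1 := by
      have h2 : min b 1 ≤ b := min_le_left _ _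
      have h3 : min b 1 ≤ 1 := min_le_right _ _
      nlinarith [sq_nonneg x]
    have h4 : (b*x^2+1) ^ (-q) ≤ min b 1 ^ (-q) * (1 + x^2) ^ (-q) := by
      calc (b*x^2+1) ^ (-q) ≤ (min b 1 * (1 + x^2)) ^ (-q) :=
          Real.rpow_le_rpow_of_nonpos (by positivity) h1 (by linarith)
        _ = min b 1 ^ (-q) * (1 + x^2) ^ (-q) :=
          Real.mul_rpow hm0.le (by positivity)
    calc |x| * (b*x^2+1) ^ (-q) ≤ (1 + x^2) ^ ((1:ℝ)/2) * (min b 1 ^ (-q) * (1 + x^2) ^ (-q)) := by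
          apply mul_le_mul habs h4 (Real.rpow_nonneg (hQ x).le _) (Real.rpow_nonneg (by positivity) _)
      _ = min b 1 ^ (-q) * (1 + x^2) ^ (-(q - 1/2)) := by
          rw [show -(q-1/2) = (1:ℝ)/2 + (-q) by ring, Real.rpow_add (by positivity)]
          ring

lemma J_rec {b p : ℝ} (hb : 0 < b) (hp : 1/2 < p) :
    (2*p) * ∫ x : ℝ, (b*x^2+1) ^ (-(p+1)) = (2*p-1) * ∫ x : ℝ, (b*x^2+1) ^ (-p) := by
  have hQ : ∀ x : ℝ, 0 < b*x^2+1 := fun x => by positivity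
  set u : ℝ → ℝ := fun x => x * (b*x^2+1) ^ (-p) with hu_def
  set v : ℝ → ℝ := fun x => (1-2*p) * (b*x^2+1)^(-p) + (2*p) * (b*x^2+1)^(-(p+1)) with hv_def
  have hu : ∀ x, HasDerivAt u (v x) x := by
    intro x
    have h1 : HasDerivAt (fun x : ℝ => b*x^2+1) (b*(2*x)) x := by
      simpa using ((hasDerivAt_pow 2 x).const_mul b).add_const 1
    have h2 : HasDerivAt (fun x : ℝ => (b*x^2+1)^(-p)) (-p * (b*x^2+1)^(-p-1) * (b*(2*x))) x :=
      by convert (Real.hasDerivAt_rpow_const (p := -p) (Or.inl (hQ x).ne')).comp x h1 using 1 <;> rfl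
    have h3 := (hasDerivAt_id x).mul h2
    have e1 : (b*x^2+1)^(-p-1) * (b*x^2+1) = (b*x^2+1)^(-p) := by
      rw [← Real.rpow_add_one (hQ x).ne']
      congr 1; ring
    have e2 : (b*x^2+1)^(-p-1) = (b*x^2+1)^(-(p+1)) := by congr 1; ring
    convert h3 using 1
    · rfl
    · rfl
    · rfl
    rw [hv_def]
    simp only [id_eq]
    rw [← e2]
    nlinarith [e1, sq_nonneg x]
  have hutop : Tendsto u atTop (nhds 0) := by
    have hb1 : Tendsto (fun x : ℝ => b^(-p) * x^(1-2*p)) atTop (nhds 0) := by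
      have := (tendsto_rpow_neg_atTop (y := 2*p-1) (by linarith)).const_mul (b^(-p))
      simpa [show -(2*p-1) = 1-2*p by ring] using this
    apply squeeze_zero' ?_ ?_ hb1
    · filter_upwards [eventually_ge_atTop (1:ℝ)] with x hx
      exact mul_nonneg (by linarith) (Real.rpow_nonneg (hQ x).le _)
    · filter_upwards [eventually_ge_atTop (1:ℝ)] with x hx
      have hx0 : (0:ℝ) < x := by linarith
      have h1 : (b*x^2+1) ^ (-p) ≤ (b*x^2) ^ (-p) :=
        Real.rpow_le_rpow_of_nonpos (by positivity) (by linarith) (by linarith)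
      have h2 : (b*x^2:ℝ) ^ (-p) = b^(-p) * x^(-(2*p)) := by
        rw [Real.mul_rpow hb.le (by positivity)]
        congr 1
        rw [← Real.rpow_natCast x 2, ← Real.rpow_mul hx0.le]
        congr 1; push_cast; ring
      calc u x ≤ x * (b^(-p) * x^(-(2*p))) := by
            rw [← h2]; exact mul_le_mul_of_nonneg_left h1 hx0.le
        _ = b^(-p) * x^(1-2*p) := by
            rw [show (1-2*p) = 1 + (-(2*p)) by ring, Real.rpow_add hx0, Real.rpow_one]
            ring
  have hubot : Tendsto u atBot (nhds 0) := by
    have h2 : u = (fun x : ℝ => -u x) ∘ (fun x : ℝ => -x) := by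
      funext x; rw [hu_def]; simp
    rw [h2]
    have h3 : Tendsto (fun x : ℝ => -u x) atTop (nhds 0) := by simpa using hutop.neg
    exact h3.comp tendsto_neg_atBot_atTop
  have hvint : Integrable v := by
    rw [hv_def]
    exact ((integrable_g hb hp).const_mul _).add
      ((integrable_g hb (by linarith : 1/2 < p+1)).const_mul _)
  have hIoi : ∫ x in Ioi (0:ℝ), v x = 0 := by
    have h := integral_Ioi_of_hasDerivAt_of_tendsto' (f := u) (f' := v) (a := 0)
      (fun x _ => hu x) hvint.integrableOn hutop
    simpa [hu_def] using h
  have hIic : ∫ x in Iic (0:ℝ), v x = 0 := by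
    have h := integral_Iic_of_hasDerivAt_of_tendsto' (f := u) (f' := v) (a := 0)
      (fun x _ => hu x) hvint.integrableOn hubot
    simpa [hu_def] using h
  have htot : ∫ x : ℝ, v x = 0 := by
    rw [← intervalIntegral.integral_Iic_add_Ioi hvint.integrableOn hvint.integrableOn, hIic, hIoi, add_zero]
  rw [hv_def] at htot
  rw [integral_add ((integrable_g hb hp).const_mul _)
    ((integrable_g hb (by linarith : 1/2 < p+1)).const_mul _),
    integral_const_mul, integral_const_mul] at htot
  linarith

lemma final_alg (σ c J0 J1 J2 A : ℝ) (hσ0 : 0 < σ) (hσ1 : 1 < σ)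
    (e1 : (2*(1/σ)) * J1 = (2*(1/σ)-1) * J0)
    (e2 : (2*(1/σ+1)) * J2 = (2*(1/σ+1)-1) * J1) :
    -(2*σ) * ((-(c/2)*((2*c*(σ+1))^(1/σ)*(2*c*(σ+1)))) * J1
        + (((2*c*(σ+1))^(1/σ)*(2*c*(σ+1))^(2:ℕ))/(2*σ+2)) * J2)
      = -(2*σ)*(2-σ)*c^2*((1/2)*((2*c*(σ+1))^(1/σ) * J0)) := by
  set A := (2*c*(σ+1))^(1/σ)
  have hσne : σ ≠ 0 := hσ0.ne'
  have hs1 : σ + 1 ≠ 0 := by linarith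
  have h1 : 2*J1 = (2-σ)*J0 := by
    have h := congrArg (fun z => σ * z) e1
    field_simp at h
    linarith
  have h2 : (2+2*σ)*J2 = (2+σ)*J1 := by
    have h := congrArg (fun z => σ * z) e2
    field_simp at h
    linarith
  have hd : (A*(2*c*(σ+1))^(2:ℕ))/(2*σ+2) = 2*c^2*(σ+1)*A := by
    field_simp
  rw [hd]
  linear_combination (-(σ*c^2*A)) * h1 + (-(2*σ*c^2*A)) * h2

set_option maxHeartbeats 1000000 in
theorem stmt12 (σ c : ℝ) (hσ : σ ∈ Set.Ioo (1:ℝ) 2) (hc : 0 < c) :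
    (-(2*σ) * (∫ x : ℝ, ((‖Phi σ c x‖ ^ (2*σ) : ℝ) : ℂ) *
          (Phi σ c x * (starRingEnd ℂ) (deriv (Phi σ c) x))).im
        = -(2*σ) * (2 - σ) * c^2 * Mass σ c)
      ∧ -(2*σ) * (2 - σ) * c^2 * Mass σ c < 0 := by
  obtain ⟨hσ1, hσ2⟩ := hσ
  have hσ0 : (0:ℝ) < σ := by linarith
  have hb : (0:ℝ) < σ^2*c^2 := by positivity
  have ha : (0:ℝ) < 2*c*(σ+1) := by positivity
  set b : ℝ := σ^2*c^2 with hbdef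
  set a : ℝ := 2*c*(σ+1) with hadef
  have hQ : ∀ x : ℝ, 0 < b*x^2+1 := fun x => by positivity
  have h2σ : (2*σ) ≠ 0 := by positivity
  have h2σ2 : (2*σ+2) ≠ 0 := by positivity
  set f : ℝ → ℝ := fun x => a * (b*x^2+1)^(-(1:ℝ)) with hfdef
  have hfpos : ∀ x, 0 < f x := fun x => by
    rw [hfdef]; positivity
  have hphi : phi σ c = fun x => (f x)^(1/(2*σ)) := by
    funext x
    unfold phi
    rw [hfdef]
    simp only
    rw [Real.rpow_neg_one]
    congr 1
    rw [hbdef, hadef, div_eq_mul_inv]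
    ring_nf
  have hφpos : ∀ x, 0 < phi σ c x := fun x => by
    rw [hphi]; exact Real.rpow_pos_of_pos (hfpos x) _
  have hφ2σ : ∀ x, phi σ c x ^ (2*σ) = f x := by
    intro x
    rw [hphi]
    simp only
    rw [← Real.rpow_mul (hfpos x).le, one_div, inv_mul_cancel₀ h2σ, Real.rpow_one]
  have hφsq : ∀ x, phi σ c x ^ (2:ℕ) = f x ^ (1/σ) := by
    intro x
    rw [hphi]
    simp only
    rw [← Real.rpow_natCast ((f x)^(1/(2*σ))) 2, ← Real.rpow_mul (hfpos x).le]
    congr 1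
    push_cast
    field_simp
  set θ : ℝ → ℝ := fun x => (c/2)*x - (∫ y in Set.Iio x, (phi σ c y) ^ (2*σ))/(2*σ+2) with hθdef
  have hPhi : ∀ x, Phi σ c x = ↑(phi σ c x) * Complex.exp (↑(θ x) * Complex.I) := by
    intro x
    unfold Phi
    congr 1
    rw [hθdef]
    simp only
    have h2 : ((2:ℂ)*(σ:ℂ)+2) ≠ 0 := by
      have := Complex.ofReal_ne_zero.mpr h2σ2
      push_cast at this
      exact this
    push_cast
    field_simp
  have habs : ∀ x, ‖Phi σ c x‖ = phi σ c x := by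
    intro x
    rw [hPhi x, norm_mul, Complex.norm_real, Real.norm_eq_abs, abs_of_pos (hφpos x), Complex.norm_exp]
    simp
  have hfint : Integrable f := by
    rw [hfdef]
    exact (integrable_g hb (by norm_num : (1:ℝ)/2 < 1)).const_mul a
  have hfcont : Continuous f := by
    rw [hfdef]
    exact continuous_const.mul ((by continuity : Continuous fun x : ℝ => b*x^2+1).rpow_const
      (fun x => Or.inl (hQ x).ne'))
  have hGd : ∀ x : ℝ, HasDerivAt (fun t => ∫ y in Set.Iio t, (phi σ c y) ^ (2*σ)) (f x) x := by
    intro x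
    have hrw : (fun t => ∫ y in Set.Iio t, (phi σ c y) ^ (2*σ))
        = fun t => (∫ y in Set.Iic (0:ℝ), f y) + ∫ y in (0:ℝ)..t, f y := by
      funext t
      simp only [hφ2σ]
      rw [← MeasureTheory.integral_Iic_eq_integral_Iio]
      have := intervalIntegral.integral_Iic_sub_Iic (hfint.integrableOn (s := Set.Iic 0))
        (hfint.integrableOn (s := Set.Iic t))
      linarith
    rw [hrw]
    exact (intervalIntegral.integral_hasDerivAt_right hfint.intervalIntegrable
      (hfcont.stronglyMeasurableAtFilter _ _) hfcont.continuousAt).const_add _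
  set θd : ℝ → ℝ := fun x => c/2 - f x/(2*σ+2) with hθddef
  have hθd : ∀ x, HasDerivAt θ (θd x) x := by
    intro x
    rw [hθdef, hθddef]
    have h1 : HasDerivAt (fun t : ℝ => (c/2)*t) (c/2) x := by
      simpa using (hasDerivAt_id x).const_mul (c/2)
    exact h1.sub ((hGd x).div_const (2*σ+2))
  set fd : ℝ → ℝ := fun x => -(a*(2*b*x)) / (b*x^2+1)^(2:ℕ) with hfddef
  have hfd : ∀ x, HasDerivAt f (fd x) x := by
    intro x
    have hf' : f = fun x => a * (b*x^2+1)⁻¹ := by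
      funext y; rw [hfdef]; simp only; rw [Real.rpow_neg_one]
    rw [hf', hfddef]
    have h1 : HasDerivAt (fun x : ℝ => b*x^2+1) (2*b*x) x := by
      have := ((hasDerivAt_pow 2 x).const_mul b).add_const 1
      convert this using 1
      · rfl
      · rfl
      simp; ring
    have h2 := (h1.inv (hQ x).ne').const_mul a
    convert h2 using 1
    · rfl
    · rfl
    · rfl
    field_simp
  set φd : ℝ → ℝ := fun x => (1/(2*σ)) * f x ^ (1/(2*σ)-1) * fd x with hφddef
  have hφd : ∀ x, HasDerivAt (phi σ c) (φd x) x := by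
    intro x
    rw [hphi, hφddef]
    have := (Real.hasDerivAt_rpow_const (p := 1/(2*σ)) (Or.inl (hfpos x).ne')).comp x (hfd x)
    convert this using 1 <;> rfl
  have hΦd : ∀ x, deriv (Phi σ c) x
      = (↑(φd x) + ↑(phi σ c x) * (↑(θd x) * Complex.I)) * Complex.exp (↑(θ x) * Complex.I) := by
    intro x
    have hfun : Phi σ c = fun y => (↑(phi σ c y) : ℂ) * Complex.exp (↑(θ y) * Complex.I) :=
      funext hPhi
    rw [hfun]
    have h1 : HasDerivAt (fun y => (↑(phi σ c y) : ℂ)) (↑(φd x)) x := (hφd x).ofReal_comp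
    have h2 : HasDerivAt (fun y => (↑(θ y) : ℂ) * Complex.I) (↑(θd x) * Complex.I) x :=
      (hθd x).ofReal_comp.mul_const _
    have h3 : HasDerivAt (fun y => (↑(phi σ c y) : ℂ) * Complex.exp (↑(θ y) * Complex.I)) _ x :=
      h1.mul h2.cexp
    rw [h3.deriv]
    ring
  set R : ℝ → ℝ := fun x => f x * phi σ c x * φd x with hRdef
  set S : ℝ → ℝ := fun x => -(f x * θd x * (phi σ c x)^(2:ℕ)) with hSdef
  have hFeq : ∀ x : ℝ, ((‖Phi σ c x‖ ^ (2*σ) : ℝ) : ℂ) *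
      (Phi σ c x * (starRingEnd ℂ) (deriv (Phi σ c) x)) = ↑(R x) + ↑(S x) * Complex.I := by
    intro x
    rw [habs x, hφ2σ x, hPhi x, hΦd x]
    have hEconj : (starRingEnd ℂ) (Complex.exp (↑(θ x) * Complex.I))
        = Complex.exp (-(↑(θ x) * Complex.I)) := by
      rw [← Complex.exp_conj]
      congr 1
      simp [Complex.conj_I]
    have hEne : Complex.exp (↑(θ x) * Complex.I) * Complex.exp (-(↑(θ x) * Complex.I)) = 1 := by
      rw [← Complex.exp_add]
      simp
    rw [map_mul, hEconj]
    simp only [map_add, map_mul, Complex.conj_ofReal, Complex.conj_I]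
    rw [hRdef, hSdef]
    push_cast
    linear_combination (↑(f x) * ↑(phi σ c x) * ↑(φd x)
      - ↑(f x) * ↑(phi σ c x)^2 * ↑(θd x) * Complex.I) * hEne
  have hfpow : ∀ (r : ℝ) (x : ℝ), f x ^ r = a ^ r * (b*x^2+1)^(-r) := by
    intro r x
    rw [hfdef]
    simp only
    rw [Real.mul_rpow ha.le (Real.rpow_nonneg (hQ x).le _), ← Real.rpow_mul (hQ x).le,
      neg_one_mul]
  have hR2 : ∀ x, R x = ((1/(2*σ)) * a^(1/σ) * (-(2*a*b)))
      * (x * (b*x^2+1)^(-(1/σ+2))) := by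
    intro x
    have efd : fd x = (-(2*a*b)) * (x * (b*x^2+1)^(-(2:ℝ))) := by
      rw [hfddef]
      simp only
      rw [show (-(2:ℝ)) = -((2:ℕ):ℝ) by norm_num, Real.rpow_neg (hQ x).le, Real.rpow_natCast]
      field_simp
    have e : f x * f x^(1/(2*σ)) * f x^(1/(2*σ)-1) = f x ^ (1/σ) := by
      have h1 : f x * f x^(1/(2*σ)) * f x^(1/(2*σ)-1)
          = f x ^ (1 + (1/(2*σ) + (1/(2*σ)-1))) := by
        rw [Real.rpow_add (hfpos x), Real.rpow_add (hfpos x), Real.rpow_one]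
        ring
      rw [h1]
      congr 1
      field_simp
      ring
    have eQ : (b*x^2+1)^(-(1/σ)) * (b*x^2+1)^(-(2:ℝ)) = (b*x^2+1)^(-(1/σ+2)) := by
      rw [show -(1/σ+2) = -(1/σ) + -(2:ℝ) by ring, Real.rpow_add (hQ x)]
    rw [hRdef]
    simp only [hphi, hφddef]
    rw [efd]
    calc f x * f x ^ (1/(2*σ)) * (1/(2*σ) * f x ^ (1/(2*σ)-1) * ((-(2*a*b)) * (x * (b*x^2+1)^(-(2:ℝ)))))
        = (1/(2*σ)) * (-(2*a*b)) * (f x * f x^(1/(2*σ)) * f x^(1/(2*σ)-1)) * (x * (b*x^2+1)^(-(2:ℝ))) := by ring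
      _ = (1/(2*σ)) * (-(2*a*b)) * (a^(1/σ) * (b*x^2+1)^(-(1/σ))) * (x * (b*x^2+1)^(-(2:ℝ))) := by
          rw [e, hfpow]
      _ = ((1/(2*σ)) * a^(1/σ) * (-(2*a*b))) * (x * ((b*x^2+1)^(-(1/σ)) * (b*x^2+1)^(-(2:ℝ)))) := by ring
      _ = ((1/(2*σ)) * a^(1/σ) * (-(2*a*b))) * (x * (b*x^2+1)^(-(1/σ+2))) := by rw [eQ]
  have hS2 : ∀ x, S x = (-(c/2)*a^(1/σ+1)) * (b*x^2+1)^(-(1/σ+1))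
      + (a^(1/σ+2)/(2*σ+2)) * (b*x^2+1)^(-(1/σ+2)) := by
    intro x
    have e1 : f x * f x^(1/σ) = f x^(1/σ+1) := by
      rw [Real.rpow_add (hfpos x), Real.rpow_one]
      ring
    have e2 : f x * (f x * f x^(1/σ)) = f x^(1/σ+2) := by
      rw [show (1/σ+2:ℝ) = 1/σ+1+1 by ring, Real.rpow_add (hfpos x) _ 1, Real.rpow_one, ← e1]
      ring
    rw [hSdef]
    simp only [hθddef, hφsq]
    calc -(f x * (c/2 - f x/(2*σ+2)) * f x^(1/σ))
        = (-(c/2))*(f x * f x^(1/σ)) + (f x * (f x * f x^(1/σ)))/(2*σ+2) := by ring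
      _ = (-(c/2))*(f x^(1/σ+1)) + (f x^(1/σ+2))/(2*σ+2) := by rw [e2, e1]
      _ = (-(c/2)*a^(1/σ+1)) * (b*x^2+1)^(-(1/σ+1))
          + (a^(1/σ+2)/(2*σ+2)) * (b*x^2+1)^(-(1/σ+2)) := by
          rw [hfpow (1/σ+1) x, hfpow (1/σ+2) x]
          ring
  have hσinv : (0:ℝ) < 1/σ := by positivity
  have hhalf : (1:ℝ)/2 < 1/σ := by
    rw [div_lt_div_iff₀ (by norm_num) hσ0]
    linarith
  have hRint : Integrable R := by
    rw [show R = fun x => ((1/(2*σ)) * a^(1/σ) * (-(2*a*b)))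
      * (x * (b*x^2+1)^(-(1/σ+2))) from funext hR2]
    exact (integrable_xg hb (by linarith : (1:ℝ) < 1/σ+2)).const_mul _
  have hint1 : Integrable (fun x : ℝ => (b*x^2+1)^(-(1/σ+1))) :=
    integrable_g hb (by linarith)
  have hint2 : Integrable (fun x : ℝ => (b*x^2+1)^(-(1/σ+2))) :=
    integrable_g hb (by linarith)
  have hintk : Integrable (fun x : ℝ => (b*x^2+1)^(-(1/σ))) :=
    integrable_g hb hhalf
  have hSint : Integrable S := by
    rw [show S = fun x => (-(c/2)*a^(1/σ+1)) * (b*x^2+1)^(-(1/σ+1))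
      + (a^(1/σ+2)/(2*σ+2)) * (b*x^2+1)^(-(1/σ+2)) from funext hS2]
    exact (hint1.const_mul _).add (hint2.const_mul _)
  have hFint : Integrable (fun x => (↑(R x) : ℂ) + ↑(S x) * Complex.I) :=
    hRint.ofReal.add (hSint.ofReal.mul_const Complex.I)
  have hIm : (∫ x : ℝ, ((‖Phi σ c x‖ ^ (2*σ) : ℝ) : ℂ) *
      (Phi σ c x * (starRingEnd ℂ) (deriv (Phi σ c) x))).im = ∫ x, S x := by
    simp only [hFeq]
    rw [← RCLike.im_eq_complex_im]
    rw [← integral_im hFint]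
    congr 1
    funext x
    simp [RCLike.im_eq_complex_im]
  have hSval : ∫ x, S x = (-(c/2)*a^(1/σ+1)) * (∫ x : ℝ, (b*x^2+1)^(-(1/σ+1)))
      + (a^(1/σ+2)/(2*σ+2)) * (∫ x : ℝ, (b*x^2+1)^(-(1/σ+2))) := by
    rw [show S = fun x => (-(c/2)*a^(1/σ+1)) * (b*x^2+1)^(-(1/σ+1))
      + (a^(1/σ+2)/(2*σ+2)) * (b*x^2+1)^(-(1/σ+2)) from funext hS2]
    rw [integral_add (hint1.const_mul _) (hint2.const_mul _), integral_const_mul,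
      integral_const_mul]
  have hMass : Mass σ c = (1/2) * (a^(1/σ) * ∫ x : ℝ, (b*x^2+1)^(-(1/σ))) := by
    unfold Mass
    congr 1
    rw [← integral_const_mul]
    congr 1
    funext x
    rw [habs x, hφsq x, hfpow (1/σ) x]
  have ha1 : a^(1/σ+1) = a^(1/σ) * a := by
    rw [Real.rpow_add ha, Real.rpow_one]
  have ha2 : a^(1/σ+2) = a^(1/σ) * a^(2:ℕ) := by
    rw [Real.rpow_add ha]
    congr 1
    rw [show ((2:ℝ)) = ((2:ℕ):ℝ) by norm_num, Real.rpow_natCast]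
  have e1 := J_rec hb hhalf
  have e2 := J_rec hb (p := 1/σ+1) (by linarith)
  simp only [show (1/σ+1+1 : ℝ) = 1/σ+2 by ring] at e2
  have hmain := final_alg σ c (∫ x : ℝ, (b*x^2+1)^(-(1/σ)))
    (∫ x : ℝ, (b*x^2+1)^(-(1/σ+1))) (∫ x : ℝ, (b*x^2+1)^(-(1/σ+2)))
    (a^(1/σ)) hσ0 hσ1 e1 e2
  have hJ0pos : 0 < ∫ x : ℝ, (b*x^2+1)^(-(1/σ)) := by
    rw [integral_pos_iff_support_of_nonneg (fun x => Real.rpow_nonneg (hQ x).le _) hintk]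
    have hsupp : Function.support (fun x : ℝ => (b*x^2+1)^(-(1/σ))) = Set.univ :=
      Set.eq_univ_of_forall (fun x => (Real.rpow_pos_of_pos (hQ x) _).ne')
    rw [hsupp]
    simp
  have hMpos : 0 < Mass σ c := by
    rw [hMass]
    exact mul_pos (by norm_num) (mul_pos (Real.rpow_pos_of_pos ha _) hJ0pos)
  constructor
  · rw [hIm, hSval, hMass, ha1, ha2, hadef]
    exact hmain
  · nlinarith [mul_pos (mul_pos (mul_pos (show (0:ℝ) < 2*σ by linarith)
      (show (0:ℝ) < 2-σ by linarith)) (pow_pos hc 2)) hMpos]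
end

section
/- Let σ ∈ (1,2), c > 0, and let Φ_c be the complex endpoint soliton of gDNLS. The linearized operator satisfies S''_c(Φ_c)(i∂ₓΦ_c) = -(c²/2)σ|Φ_c|^{2σ}Φ_c, and consequently ⟨S''_c(Φ_c)i∂ₓΦ_c, i∂ₓΦ_c⟩ = -(c⁴/2)(2-σ)σ M(Φ_c) < 0. -/
open MeasureTheory Complex

/-- Second variation $S''_c(\Phi)$ applied to $f$. -/
noncomputable def Spp (σ c : ℝ) (Φ f : ℝ → ℂ) (x : ℝ) : ℂ :=
  -(deriv (deriv f) x) + Complex.I * (c : ℂ) * deriv f x + ((c^2/4 : ℝ) : ℂ) * f x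
    - Complex.I * (σ : ℂ) * ((‖Φ x‖ ^ (2*σ - 2) : ℝ) : ℂ) *
        (starRingEnd ℂ) (Φ x) * deriv Φ x * f x
    - Complex.I * (σ : ℂ) * ((‖Φ x‖ ^ (2*σ - 2) : ℝ) : ℂ) *
        Φ x * deriv Φ x * (starRingEnd ℂ) (f x)
    - Complex.I * ((‖Φ x‖ ^ (2*σ) : ℝ) : ℂ) * deriv f x

open MeasureTheory Set Filter Real Complex

namespace St13

noncomputable section

variable (σ c : ℝ)

def w (x : ℝ) : ℝ := σ^2*c^2*x^2 + 1
def uu (x : ℝ) : ℝ := 2*c*(σ+1) / w σ c x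
def uu1 (x : ℝ) : ℝ := -(4*c*(σ+1)*(σ^2*c^2)*x) / (w σ c x)^2
def uu2 (x : ℝ) : ℝ := (12*c*(σ+1)*(σ^2*c^2)^2*x^2 - 4*c*(σ+1)*(σ^2*c^2)) / (w σ c x)^3
def rr (x : ℝ) : ℝ := -(σ^2*c^2*x) / (σ * w σ c x)
def rr1 (x : ℝ) : ℝ := (σ^2*c^2)*((σ^2*c^2)*x^2-1) / (σ * (w σ c x)^2)
def rr2 (x : ℝ) : ℝ := 2*(σ^2*c^2)^2*x*(3-(σ^2*c^2)*x^2) / (σ * (w σ c x)^3)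
def t1 (x : ℝ) : ℝ := c/2 - uu σ c x/(2*σ+2)
def t2 (x : ℝ) : ℝ := -uu1 σ c x/(2*σ+2)
def t3 (x : ℝ) : ℝ := -uu2 σ c x/(2*σ+2)
def th (x : ℝ) : ℝ := c/2*x - (∫ y in Set.Iio x, uu σ c y)/(2*σ+2)
def ph (x : ℝ) : ℝ := (uu σ c x)^(1/(2*σ))
def EE (x : ℝ) : ℂ := Complex.exp ((th σ c x : ℂ) * Complex.I)
def Q (x : ℝ) : ℂ := (rr σ c x : ℂ) + (t1 σ c x : ℂ)*Complex.I
def Qb (x : ℝ) : ℂ := (rr σ c x : ℂ) - (t1 σ c x : ℂ)*Complex.I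
def Q1 (x : ℝ) : ℂ := (rr1 σ c x : ℂ) + (t2 σ c x : ℂ)*Complex.I
def Q2 (x : ℝ) : ℂ := (rr2 σ c x : ℂ) + (t3 σ c x : ℂ)*Complex.I
def P1 (x : ℝ) : ℂ := (ph σ c x : ℂ) * EE σ c x * Q σ c x
def P2 (x : ℝ) : ℂ := (ph σ c x : ℂ) * EE σ c x * (Q σ c x * Q σ c x + Q1 σ c x)
def P3 (x : ℝ) : ℂ := (ph σ c x : ℂ) * EE σ c x *
  (Q σ c x * Q σ c x * Q σ c x + 3 * Q σ c x * Q1 σ c x + Q2 σ c x)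

variable {σ c}

lemma w_pos (x : ℝ) : 0 < w σ c x := by unfold w; positivity

lemma w_ne (x : ℝ) : w σ c x ≠ 0 := (w_pos x).ne'

lemma uu_pos (hσ : 1 < σ) (hc : 0 < c) (x : ℝ) : 0 < uu σ c x := by
  unfold uu
  have := w_pos (σ := σ) (c := c) x
  have : (0:ℝ) < 2*c*(σ+1) := by nlinarith
  positivity

lemma ph_pos (hσ : 1 < σ) (hc : 0 < c) (x : ℝ) : 0 < ph σ c x :=
  Real.rpow_pos_of_pos (uu_pos hσ hc x) _

lemma hasDerivAt_w (x : ℝ) : HasDerivAt (w σ c) (2*(σ^2*c^2)*x) x := by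
  have h := ((hasDerivAt_pow 2 x).const_mul (σ^2*c^2)).add_const 1
  refine h.congr_deriv ?_
  ring

lemma hasDerivAt_uu (x : ℝ) : HasDerivAt (uu σ c) (uu1 σ c x) x := by
  have h := (hasDerivAt_const x (2*c*(σ+1))).div (hasDerivAt_w (σ := σ) (c := c) x) (w_ne (σ := σ) (c := c) x)
  refine h.congr_deriv ?_
  unfold uu1
  ring

lemma hasDerivAt_uu1 (x : ℝ) : HasDerivAt (uu1 σ c) (uu2 σ c x) x := by
  have hnum : HasDerivAt (fun x : ℝ => -(4*c*(σ+1)*(σ^2*c^2)*x)) (-(4*c*(σ+1)*(σ^2*c^2))) x := by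
    exact (((hasDerivAt_id x).const_mul (4*c*(σ+1)*(σ^2*c^2))).neg).congr_deriv (by ring)
  have hden : HasDerivAt (fun x => (w σ c x)^2) (2*(w σ c x)^1*(2*(σ^2*c^2)*x)) x :=
    (hasDerivAt_w (σ := σ) (c := c) x).pow 2
  have h := hnum.div hden (pow_ne_zero _ (w_ne (σ := σ) (c := c) x))
  refine h.congr_deriv ?_
  unfold uu2 w
  field_simp
  ring

lemma hasDerivAt_rr (hσ : 1 < σ) (x : ℝ) : HasDerivAt (rr σ c) (rr1 σ c x) x := by
  have hσ0 : σ ≠ 0 := by linarith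
  have hnum : HasDerivAt (fun x : ℝ => -(σ^2*c^2*x)) (-(σ^2*c^2)) x := by
    exact (((hasDerivAt_id x).const_mul (σ^2*c^2)).neg).congr_deriv (by ring)
  have hden : HasDerivAt (fun x => σ * w σ c x) (σ * (2*(σ^2*c^2)*x)) x :=
    (hasDerivAt_w (σ := σ) (c := c) x).const_mul σ
  have h := hnum.div hden (mul_ne_zero hσ0 (w_ne (σ := σ) (c := c) x))
  refine h.congr_deriv ?_
  unfold rr1 w
  field_simp
  ring

lemma hasDerivAt_rr1 (hσ : 1 < σ) (x : ℝ) : HasDerivAt (rr1 σ c) (rr2 σ c x) x := by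
  have hσ0 : σ ≠ 0 := by linarith
  have hnum : HasDerivAt (fun x : ℝ => (σ^2*c^2)*((σ^2*c^2)*x^2-1)) ((σ^2*c^2)*((σ^2*c^2)*(2*x))) x := by
    exact (((hasDerivAt_pow 2 x).const_mul (σ^2*c^2)).sub_const 1).const_mul (σ^2*c^2) |>.congr_deriv (by ring)
  have hden : HasDerivAt (fun x => σ * (w σ c x)^2) (σ * (2*(w σ c x)^1*(2*(σ^2*c^2)*x))) x :=
    ((hasDerivAt_w (σ := σ) (c := c) x).pow 2).const_mul σ
  have h := hnum.div hden (mul_ne_zero hσ0 (pow_ne_zero _ (w_ne (σ := σ) (c := c) x)))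
  refine h.congr_deriv ?_
  unfold rr2 w
  field_simp
  ring

lemma hasDerivAt_t1 (x : ℝ) : HasDerivAt (t1 σ c) (t2 σ c x) x := by
  have h := ((hasDerivAt_uu (σ := σ) (c := c) x).div_const (2*σ+2)).const_sub (c/2)
  refine h.congr_deriv ?_
  unfold t2
  ring

lemma hasDerivAt_t2 (x : ℝ) : HasDerivAt (t2 σ c) (t3 σ c x) x := by
  have h := ((hasDerivAt_uu1 (σ := σ) (c := c) x).div_const (2*σ+2)).neg
  have h2 : (-fun x => uu1 σ c x/(2*σ+2)) = t2 σ c := by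
    funext y; unfold t2; simp only [Pi.neg_apply]; ring
  rw [h2] at h
  refine h.congr_deriv ?_
  unfold t3
  ring


lemma intJ {B q : ℝ} (hB : 0 < B) (hq : 1/2 < q) :
    Integrable (fun x : ℝ => (B*x^2+1)^(-q)) := by
  have hr : ((Module.finrank ℝ ℝ : ℝ) < 2*q) := by
    simp only [Module.finrank_self, Nat.cast_one]; linarith
  have h1 : Integrable (fun x : ℝ => ((1:ℝ)+‖x‖^2)^(-(2*q)/2)) :=
    integrable_rpow_neg_one_add_norm_sq (E := ℝ) hr
  have h2 : Integrable (fun x : ℝ => ((1:ℝ)+x^2)^(-q)) := by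
    refine h1.congr ?_
    filter_upwards with x
    rw [Real.norm_eq_abs, _root_.sq_abs]
    congr 1
    ring
  have h3 := h2.comp_mul_left' (R := Real.sqrt B) (by positivity)
  refine h3.congr ?_
  filter_upwards with x
  congr 1
  rw [mul_pow, Real.sq_sqrt hB.le]
  ring



lemma absx_le {B : ℝ} (hB : 0 < B) (x : ℝ) : |x| ≤ (B*x^2+1) / (2*Real.sqrt B) := by
  rw [le_div_iff₀ (by positivity)]
  nlinarith [sq_nonneg (Real.sqrt B * |x| - 1), Real.sq_sqrt hB.le, _root_.sq_abs x, abs_nonneg x,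
    Real.sqrt_pos.mpr hB]

lemma intJx {B q : ℝ} (hB : 0 < B) (hq : 1/2 < q) :
    Integrable (fun x : ℝ => x * (B*x^2+1)^(-(q+1))) := by
  have h := (intJ hB hq).const_mul (1/(2*Real.sqrt B))
  refine h.mono' ?_ ?_
  · apply Measurable.aestronglyMeasurable
    fun_prop
  · filter_upwards with x
    have hw : (0:ℝ) < B*x^2+1 := by positivity
    rw [Real.norm_eq_abs, abs_mul, abs_of_pos (Real.rpow_pos_of_pos hw _)]
    have h1 : (B*x^2+1)^(-(q+1)) = (B*x^2+1)⁻¹ * (B*x^2+1)^(-q) := by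
      rw [← Real.rpow_neg_one (B*x^2+1), ← Real.rpow_add hw]
      congr 1; ring
    rw [h1, ← mul_assoc]
    have h2 : |x| * (B*x^2+1)⁻¹ ≤ 1/(2*Real.sqrt B) := by
      rw [mul_inv_le_iff₀ hw]
      calc |x| ≤ (B*x^2+1) / (2*Real.sqrt B) := absx_le hB x
        _ = 1/(2*Real.sqrt B) * (B*x^2+1) := by ring
    have h3 : (0:ℝ) < (B*x^2+1)^(-q) := Real.rpow_pos_of_pos hw _
    calc |x| * (B*x^2+1)⁻¹ * (B*x^2+1)^(-q) ≤ 1/(2*Real.sqrt B) * (B*x^2+1)^(-q) := by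
          exact mul_le_mul_of_nonneg_right h2 h3.le
      _ = _ := rfl

lemma tendsto_bdry {B q : ℝ} (hB : 0 < B) (hq : 1/2 < q) :
    Tendsto (fun x : ℝ => x * (B*x^2+1)^(-q)) atTop (nhds 0) := by
  have hbound : ∀ᶠ x : ℝ in atTop, |x * (B*x^2+1)^(-q)| ≤ B^(-q) * x^(1-2*q) := by
    filter_upwards [eventually_gt_atTop 0] with x hx
    have hw : (0:ℝ) < B*x^2+1 := by positivity
    have hBx : (0:ℝ) < B*x^2 := by positivity
    rw [abs_mul, abs_of_pos hx, abs_of_pos (Real.rpow_pos_of_pos hw _)]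
    have h1 : (B*x^2+1)^(-q) ≤ (B*x^2)^(-q) :=
      Real.rpow_le_rpow_of_nonpos hBx (by linarith) (by linarith)
    have h2 : (B*x^2)^(-q) = B^(-q) * (x^2)^(-q) := Real.mul_rpow hB.le (by positivity)
    have h3 : (x^2)^(-q) = x^(-(2*q)) := by
      rw [← Real.rpow_natCast x 2, ← Real.rpow_mul hx.le]
      norm_num
    calc x * (B*x^2+1)^(-q) ≤ x * (B*x^2)^(-q) := by
          exact mul_le_mul_of_nonneg_left h1 hx.le
      _ = B^(-q) * (x * x^(-(2*q))) := by rw [h2, h3]; ring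
      _ = B^(-q) * x^(1-2*q) := by
          congr 1
          rw [show x * x^(-(2*q)) = x^(1:ℝ) * x^(-(2*q)) by rw [Real.rpow_one],
            ← Real.rpow_add hx]
          norm_num [sub_eq_add_neg]
  have hlim : Tendsto (fun x : ℝ => B^(-q) * x^(1-2*q)) atTop (nhds 0) := by
    rw [show (0:ℝ) = B^(-q) * 0 by ring]
    exact (tendsto_rpow_neg_atTop (y := 2*q-1) (by linarith)).const_mul _ |>.congr' (by
      filter_upwards with x
      rw [show -(2*q-1) = 1-2*q by ring])
  apply squeeze_zero_norm' hbound hlim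




lemma tendsto_bdry_bot {B q : ℝ} (hB : 0 < B) (hq : 1/2 < q) :
    Tendsto (fun x : ℝ => x * (B*x^2+1)^(-q)) atBot (nhds 0) := by
  have h := ((tendsto_bdry hB hq).neg).comp tendsto_neg_atBot_atTop
  simp only [Function.comp_def, neg_zero] at h
  refine h.congr ?_
  intro x
  rw [neg_sq]
  ring

lemma hasDerivAt_bdry {B q : ℝ} (hB : 0 < B) (x : ℝ) :
    HasDerivAt (fun x : ℝ => x * (B*x^2+1)^(-q))
      ((1-2*q) * (B*x^2+1)^(-q) + 2*q * (B*x^2+1)^(-(q+1))) x := by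
  have hw : (0:ℝ) < B*x^2+1 := by positivity
  have hwD : HasDerivAt (fun x : ℝ => B*x^2+1) (2*B*x) x := by
    have h := ((hasDerivAt_pow 2 x).const_mul B).add_const 1
    refine h.congr_deriv ?_; ring
  have hrp : HasDerivAt (fun x : ℝ => (B*x^2+1)^(-q))
      (-q * (B*x^2+1)^(-q-1) * (2*B*x)) x := by
    have := hwD.rpow_const (p := -q) (Or.inl hw.ne')
    convert this using 1
    ring
  have h := (hasDerivAt_id x).mul hrp
  refine h.congr_deriv ?_
  have hsplit : (B*x^2+1)^(-q) = (B*x^2+1) * (B*x^2+1)^(-q-1) := by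
    rw [show (B*x^2+1) * (B*x^2+1)^(-q-1) = (B*x^2+1)^(1:ℝ) * (B*x^2+1)^(-q-1) by
      rw [Real.rpow_one], ← Real.rpow_add hw]
    norm_num
  have hsplit2 : (B*x^2+1)^(-(q+1)) = (B*x^2+1)^(-q-1) := by congr 1; ring
  rw [hsplit2, hsplit]
  simp only [id_eq]
  ring

lemma J_rec {B q : ℝ} (hB : 0 < B) (hq : 1/2 < q) :
    ∫ x : ℝ, (B*x^2+1)^(-(q+1)) = ((2*q-1)/(2*q)) * ∫ x : ℝ, (B*x^2+1)^(-q) := by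
  have hq1 : 1/2 < q + 1 := by linarith
  have hJ := intJ hB hq
  have hJ1 := intJ hB hq1
  set g : ℝ → ℝ := fun x : ℝ => (1-2*q) * (B*x^2+1)^(-q) + 2*q * (B*x^2+1)^(-(q+1)) with hg
  have hgint : Integrable g := (hJ.const_mul _).add (hJ1.const_mul _)
  have h0 : (fun x : ℝ => x * (B*x^2+1)^(-q)) 0 = 0 := by simp
  have hIoi : ∫ x in Ioi (0:ℝ), g x = 0 := by
    rw [integral_Ioi_of_hasDerivAt_of_tendsto' (m := 0)
      (fun x _ => hasDerivAt_bdry hB x) hgint.integrableOn (tendsto_bdry hB hq)]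
    simp
  have hIic : ∫ x in Iic (0:ℝ), g x = 0 := by
    rw [integral_Iic_of_hasDerivAt_of_tendsto' (m := 0)
      (fun x _ => hasDerivAt_bdry hB x) hgint.integrableOn (tendsto_bdry_bot hB hq)]
    simp
  have htot : ∫ x : ℝ, g x = 0 := by
    rw [← intervalIntegral.integral_Iic_add_Ioi (b := (0:ℝ)) hgint.integrableOn hgint.integrableOn, hIoi, hIic]
    ring
  rw [hg] at htot
  rw [integral_add (hJ.const_mul _) (hJ1.const_mul _), integral_const_mul, integral_const_mul]
    at htot
  have hq0 : (2*q) ≠ 0 := by positivity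
  rw [div_mul_eq_mul_div, eq_div_iff hq0]
  linarith [htot]

lemma J_pos {B q : ℝ} (hB : 0 < B) (hq : 1/2 < q) :
    0 < ∫ x : ℝ, (B*x^2+1)^(-q) := by
  have hpos : ∀ x : ℝ, 0 < (B*x^2+1)^(-q) := fun x =>
    Real.rpow_pos_of_pos (by positivity) _
  rw [integral_pos_iff_support_of_nonneg_ae (ae_of_all _ fun x => (hpos x).le) (intJ hB hq)]
  have hsupp : (Function.support fun x : ℝ => (B*x^2+1)^(-q)) = Set.univ :=
    Set.eq_univ_of_forall fun x => (hpos x).ne'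
  rw [hsupp]
  simp




lemma uu_int (hσ : 1 < σ) (hc : 0 < c) : Integrable (uu σ c) := by
  have hσc : σ * c ≠ 0 := by positivity
  have h1 := integrable_inv_one_add_sq.comp_mul_left' (R := σ*c) hσc
  refine (h1.const_mul (2*c*(σ+1))).congr ?_
  filter_upwards with x
  unfold uu w
  rw [div_eq_mul_inv]
  congr 2
  ring

lemma cont_uu : Continuous (uu σ c) := by
  unfold uu
  exact continuous_const.div (by unfold w; fun_prop) w_ne

lemma hasDerivAt_G (hσ : 1 < σ) (hc : 0 < c) (x : ℝ) :
    HasDerivAt (fun b => ∫ y in Set.Iio b, uu σ c y) (uu σ c x) x := by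
  have hI := uu_int hσ hc
  have key : ∀ b : ℝ, ∫ y in Set.Iio b, uu σ c y
      = (∫ y in Set.Iic (0:ℝ), uu σ c y) + ∫ y in (0:ℝ)..b, uu σ c y := by
    intro b
    have h1 : ∫ y in Set.Iio b, uu σ c y = ∫ y in Set.Iic b, uu σ c y :=
      setIntegral_congr_set Iio_ae_eq_Iic
    have h2 := intervalIntegral.integral_Iic_sub_Iic (μ := volume)
      (hI.integrableOn (s := Set.Iic 0)) (hI.integrableOn (s := Set.Iic b)) (a := 0) (b := b)
    rw [h1]
    linarith
  simp only [key]
  have hD : HasDerivAt (fun b => ∫ y in (0:ℝ)..b, uu σ c y) (uu σ c x) x :=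
    intervalIntegral.integral_hasDerivAt_right hI.intervalIntegrable
      (cont_uu.stronglyMeasurableAtFilter _ _) cont_uu.continuousAt
  exact hD.const_add _

lemma hasDerivAt_th (hσ : 1 < σ) (hc : 0 < c) (x : ℝ) :
    HasDerivAt (th σ c) (t1 σ c x) x := by
  have h := ((hasDerivAt_id x).const_mul (c/2)).sub
    ((hasDerivAt_G hσ hc x).div_const (2*σ+2))
  refine h.congr_deriv ?_
  unfold t1
  ring

lemma uu_ne (hσ : 1 < σ) (hc : 0 < c) (x : ℝ) : uu σ c x ≠ 0 := (uu_pos hσ hc x).ne'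

lemma hasDerivAt_ph (hσ : 1 < σ) (hc : 0 < c) (x : ℝ) :
    HasDerivAt (ph σ c) (ph σ c x * rr σ c x) x := by
  have hσ0 : σ ≠ 0 := by linarith
  have h := (hasDerivAt_uu (σ := σ) (c := c) x).rpow_const (p := 1/(2*σ))
    (Or.inl (uu_ne hσ hc x))
  refine h.congr_deriv ?_
  rw [Real.rpow_sub_one (uu_ne hσ hc x)]
  have hc0 : c ≠ 0 := hc.ne'
  have hσ1 : σ + 1 ≠ 0 := by linarith
  have hw := w_ne (σ := σ) (c := c) x
  have hrw : rr σ c x = uu1 σ c x * (1/(2*σ)) / uu σ c x := by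
    unfold rr uu1 uu
    field_simp
    ring
  rw [hrw]
  unfold ph
  field_simp

lemma hasDerivAt_Q (hσ : 1 < σ) (hc : 0 < c) (x : ℝ) :
    HasDerivAt (Q σ c) (Q1 σ c x) x :=
  ((hasDerivAt_rr hσ x).ofReal_comp).add
    (((hasDerivAt_t1 (σ := σ) (c := c) x).ofReal_comp).mul_const Complex.I)

lemma hasDerivAt_Q1 (hσ : 1 < σ) (hc : 0 < c) (x : ℝ) :
    HasDerivAt (Q1 σ c) (Q2 σ c x) x :=
  ((hasDerivAt_rr1 hσ x).ofReal_comp).add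
    (((hasDerivAt_t2 (σ := σ) (c := c) x).ofReal_comp).mul_const Complex.I)

lemma hasDerivAt_EE (hσ : 1 < σ) (hc : 0 < c) (x : ℝ) :
    HasDerivAt (EE σ c) (EE σ c x * ((t1 σ c x : ℂ) * Complex.I)) x := by
  have h := (((hasDerivAt_th hσ hc x).ofReal_comp).mul_const Complex.I).cexp
  exact h

lemma hasDerivAt_phEE (hσ : 1 < σ) (hc : 0 < c) (x : ℝ) :
    HasDerivAt (fun y => (ph σ c y : ℂ) * EE σ c y) (P1 σ c x) x := by
  have h := ((hasDerivAt_ph hσ hc x).ofReal_comp).mul (hasDerivAt_EE hσ hc x)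
  refine h.congr_deriv ?_
  unfold P1 Q
  push_cast
  ring

lemma hasDerivAt_P1 (hσ : 1 < σ) (hc : 0 < c) (x : ℝ) :
    HasDerivAt (P1 σ c) (P2 σ c x) x := by
  have h := (hasDerivAt_phEE hσ hc x).mul (hasDerivAt_Q hσ hc x)
  refine h.congr_deriv ?_
  unfold P1 P2
  ring

lemma hasDerivAt_P2 (hσ : 1 < σ) (hc : 0 < c) (x : ℝ) :
    HasDerivAt (P2 σ c) (P3 σ c x) x := by
  have hq : HasDerivAt (fun y => Q σ c y * Q σ c y + Q1 σ c y)
      (Q1 σ c x * Q σ c x + Q σ c x * Q1 σ c x + Q2 σ c x) x :=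
    ((hasDerivAt_Q hσ hc x).mul (hasDerivAt_Q hσ hc x)).add (hasDerivAt_Q1 hσ hc x)
  have h := (hasDerivAt_phEE hσ hc x).mul hq
  refine h.congr_deriv ?_
  unfold P3 P1
  ring


lemma phi_eq (hσ : 1 < σ) (hc : 0 < c) (x : ℝ) : phi σ c x = ph σ c x := by
  unfold phi ph uu w
  congr 2
  ring

lemma ph_rpow (hσ : 1 < σ) (hc : 0 < c) (x : ℝ) : (ph σ c x) ^ (2*σ) = uu σ c x := by
  unfold ph
  rw [← Real.rpow_mul (uu_pos hσ hc x).le]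
  rw [show (1/(2*σ)) * (2*σ) = 1 by field_simp]
  exact Real.rpow_one _

lemma Phi_eq (hσ : 1 < σ) (hc : 0 < c) :
    Phi σ c = fun x => (ph σ c x : ℂ) * EE σ c x := by
  funext x
  unfold Phi EE
  rw [phi_eq hσ hc]
  congr 1
  have hint : ∀ y : ℝ, (phi σ c y) ^ (2*σ) = uu σ c y := by
    intro y; rw [phi_eq hσ hc]; exact ph_rpow hσ hc y
  simp only [hint]
  unfold th
  have h2σ : (2*(σ:ℂ)+2) ≠ 0 := by
    intro h
    have : (2*σ+2 : ℝ) = 0 := by exact_mod_cast h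
    linarith
  push_cast
  field_simp

lemma EE_ne (x : ℝ) : EE σ c x ≠ 0 := Complex.exp_ne_zero _

lemma EE_conj (x : ℝ) : (starRingEnd ℂ) (EE σ c x) = (EE σ c x)⁻¹ := by
  unfold EE
  rw [← Complex.exp_conj, ← Complex.exp_neg]
  congr 1
  simp [Complex.conj_ofReal]

lemma abs_Phi (hσ : 1 < σ) (hc : 0 < c) (x : ℝ) :
    ‖Phi σ c x‖ = ph σ c x := by
  rw [Phi_eq hσ hc]
  simp only [norm_mul, Complex.norm_real, Real.norm_eq_abs, abs_of_pos (ph_pos hσ hc x)]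
  unfold EE
  rw [Complex.norm_exp]
  simp

lemma abs_Phi_rpow (hσ : 1 < σ) (hc : 0 < c) (x : ℝ) :
    ‖Phi σ c x‖ ^ (2*σ) = uu σ c x := by
  rw [abs_Phi hσ hc, ph_rpow hσ hc]

lemma abs_Phi_rpow2 (hσ : 1 < σ) (hc : 0 < c) (x : ℝ) :
    ‖Phi σ c x‖ ^ (2*σ-2) = uu σ c x / (ph σ c x)^2 := by
  rw [abs_Phi hσ hc]
  rw [show (2*σ-2) = 2*σ - (2:ℕ) by norm_num]
  rw [Real.rpow_sub (ph_pos hσ hc x), ph_rpow hσ hc, Real.rpow_natCast]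

lemma deriv_Phi (hσ : 1 < σ) (hc : 0 < c) (x : ℝ) :
    deriv (Phi σ c) x = P1 σ c x := by
  rw [Phi_eq hσ hc]
  exact (hasDerivAt_phEE hσ hc x).deriv

lemma deriv_f (hσ : 1 < σ) (hc : 0 < c) (x : ℝ) :
    deriv (fun y => Complex.I * deriv (Phi σ c) y) x = Complex.I * P2 σ c x := by
  have h1 : (fun y => Complex.I * deriv (Phi σ c) y) = fun y => Complex.I * P1 σ c y :=
    funext fun y => by rw [deriv_Phi hσ hc]
  rw [h1]
  exact ((hasDerivAt_P1 hσ hc x).const_mul Complex.I).deriv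

lemma deriv2_f (hσ : 1 < σ) (hc : 0 < c) (x : ℝ) :
    deriv (deriv (fun y => Complex.I * deriv (Phi σ c) y)) x = Complex.I * P3 σ c x := by
  have h1 : deriv (fun y => Complex.I * deriv (Phi σ c) y) = fun y => Complex.I * P2 σ c y :=
    funext fun y => deriv_f hσ hc y
  rw [h1]
  exact ((hasDerivAt_P2 hσ hc x).const_mul Complex.I).deriv


set_option maxHeartbeats 3200000 in
lemma key (hσ1 : 1 < σ) (hσ2 : σ < 2) (hc : 0 < c) (x : ℝ) :
    -Complex.I*(Q σ c x*Q σ c x*Q σ c x + 3*(Q σ c x*Q1 σ c x) + Q2 σ c x)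
      + ((uu σ c x : ℂ) - (c:ℂ))*(Q σ c x*Q σ c x + Q1 σ c x)
      + Complex.I*((c^2/4 : ℝ):ℂ)*Q σ c x
      + (σ:ℂ)*(uu σ c x : ℂ)*(Q σ c x*Q σ c x)
      - (σ:ℂ)*(uu σ c x : ℂ)*(Q σ c x*Qb σ c x)
    = -((c^2/2 : ℝ):ℂ)*(σ:ℂ)*(uu σ c x : ℂ) := by
  have hσ0 : σ ≠ 0 := by linarith
  have hc0 : c ≠ 0 := hc.ne'
  have hσ1' : σ + 1 ≠ 0 := by linarith
  have hw := w_ne (σ := σ) (c := c) x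
  have hW : w σ c x = σ^2*c^2*x^2+1 := rfl
  have hwx : (σ^2*c^2*x^2+1) ≠ 0 := by positivity
  have e_rr : rr σ c x = -(σ*c^2*x)/(σ^2*c^2*x^2+1) := by
    unfold rr; rw [hW] at *; field_simp
  have e_rr1 : rr1 σ c x = (σ*c^2*(σ^2*c^2*x^2-1))/(σ^2*c^2*x^2+1)^2 := by
    unfold rr1; rw [hW] at *; field_simp
  have e_rr2 : rr2 σ c x = (2*σ^3*c^4*x*(3-σ^2*c^2*x^2))/(σ^2*c^2*x^2+1)^3 := by
    unfold rr2; rw [hW] at *; field_simp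
  have e_t1 : t1 σ c x = c/2 - c/(σ^2*c^2*x^2+1) := by
    unfold t1 uu; rw [hW] at *; field_simp
  have e_t2 : t2 σ c x = (2*σ^2*c^3*x)/(σ^2*c^2*x^2+1)^2 := by
    unfold t2 uu1; rw [hW] at *; field_simp; ring
  have e_t3 : t3 σ c x = (2*σ^2*c^3*(1-3*σ^2*c^2*x^2))/(σ^2*c^2*x^2+1)^3 := by
    unfold t3 uu2; rw [hW] at *; field_simp; ring
  have e_uu : uu σ c x = (2*c*(σ+1))/(σ^2*c^2*x^2+1) := by
    unfold uu; rw [hW]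
  unfold Q Qb Q1 Q2
  rw [e_rr, e_rr1, e_rr2, e_t1, e_t2, e_t3, e_uu]
  rw [Complex.ext_iff]
  constructor
  · simp only [Complex.add_re, Complex.sub_re, Complex.mul_re, Complex.mul_im,
      Complex.neg_re, Complex.neg_im, Complex.I_re, Complex.I_im, Complex.ofReal_re,
      Complex.ofReal_im, Complex.add_im, Complex.sub_im, Complex.re_ofNat, Complex.im_ofNat]
    field_simp
    ring
  · simp only [Complex.add_re, Complex.sub_re, Complex.mul_re, Complex.mul_im,
      Complex.neg_re, Complex.neg_im, Complex.I_re, Complex.I_im, Complex.ofReal_re,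
      Complex.ofReal_im, Complex.add_im, Complex.sub_im, Complex.re_ofNat, Complex.im_ofNat]
    field_simp
    ring

lemma conj_Q (x : ℝ) : (starRingEnd ℂ) (Q σ c x) = Qb σ c x := by
  unfold Q Qb
  simp [Complex.conj_ofReal]
  ring

lemma conj_P1 (x : ℝ) : (starRingEnd ℂ) (P1 σ c x)
    = (ph σ c x : ℂ) * (starRingEnd ℂ) (EE σ c x) * Qb σ c x := by
  unfold P1
  simp only [map_mul, Complex.conj_ofReal, conj_Q]

lemma conj_Phi (hσ1 : 1 < σ) (hc : 0 < c) (x : ℝ) :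
    (starRingEnd ℂ) (Phi σ c x) = (ph σ c x : ℂ) * (starRingEnd ℂ) (EE σ c x) := by
  rw [Phi_eq hσ1 hc]
  simp only [map_mul, Complex.conj_ofReal]

lemma abs_mul_ph (hσ1 : 1 < σ) (hc : 0 < c) (x : ℝ) :
    ‖Phi σ c x‖ ^ (2*σ-2) * (ph σ c x)^2 = uu σ c x := by
  rw [abs_Phi hσ1 hc]
  rw [show ((ph σ c x)^2 : ℝ) = (ph σ c x)^((2:ℕ):ℝ) by rw [Real.rpow_natCast]]
  rw [← Real.rpow_add (ph_pos hσ1 hc x)]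
  rw [show (2*σ-2+(2:ℕ)) = 2*σ by push_cast; ring]
  exact ph_rpow hσ1 hc x

lemma pointwise (hσ1 : 1 < σ) (hσ2 : σ < 2) (hc : 0 < c) (x : ℝ) :
    Spp σ c (Phi σ c) (fun y => Complex.I * deriv (Phi σ c) y) x
      = -((c^2/2 : ℝ) : ℂ) * (σ : ℂ) * ((‖Phi σ c x‖ ^ (2*σ) : ℝ) : ℂ)
          * Phi σ c x := by
  have hE := EE_ne (σ := σ) (c := c) x
  have heb : EE σ c x * (starRingEnd ℂ) (EE σ c x) = 1 := by
    rw [EE_conj, mul_inv_cancel₀ hE]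
  have hm : ((‖Phi σ c x‖ ^ (2*σ-2) : ℝ) : ℂ) * ((ph σ c x : ℝ) : ℂ)^2
      = ((uu σ c x : ℝ) : ℂ) := by
    rw [show ((ph σ c x : ℝ) : ℂ)^2 = (((ph σ c x)^2 : ℝ) : ℂ) by push_cast; ring]
    rw [← Complex.ofReal_mul, abs_mul_ph hσ1 hc]
  unfold Spp
  rw [deriv2_f hσ1 hc x, deriv_f hσ1 hc x]
  simp only [deriv_Phi hσ1 hc]
  simp only [abs_Phi_rpow hσ1 hc]
  set m : ℂ := ((‖Phi σ c x‖ ^ (2*σ-2) : ℝ) : ℂ) with hmdef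
  simp only [conj_Phi hσ1 hc, map_mul, Complex.conj_I, conj_P1]
  have hPhix : Phi σ c x = (ph σ c x : ℂ) * EE σ c x := by rw [Phi_eq hσ1 hc]
  rw [hPhix]
  unfold P1 P2 P3
  linear_combination ((ph σ c x : ℂ) * EE σ c x) * key hσ1 hσ2 hc x
    + ((σ:ℂ) * (ph σ c x : ℂ) * EE σ c x
        * (Q σ c x*Q σ c x - Q σ c x*Qb σ c x)
        * ((starRingEnd ℂ) (EE σ c x) * EE σ c x)) * hm
    + ((σ:ℂ) * (ph σ c x : ℂ) * EE σ c x
        * (Q σ c x*Q σ c x - Q σ c x*Qb σ c x) * ((uu σ c x : ℝ) : ℂ)) * heb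
    + ((ph σ c x : ℂ) * EE σ c x * (((c:ℂ) - (uu σ c x : ℂ))*(Q σ c x*Q σ c x + Q1 σ c x))
        + (ph σ c x : ℂ)^3 * EE σ c x^2 * (σ:ℂ) * m * (starRingEnd ℂ) (EE σ c x)
          * (Q σ c x*Qb σ c x - Q σ c x*Q σ c x)) * Complex.I_sq

lemma A_pos (hσ1 : 1 < σ) (hc : 0 < c) : (0:ℝ) < 2*c*(σ+1) := by nlinarith

lemma ph_sq (hσ1 : 1 < σ) (hc : 0 < c) (x : ℝ) :
    (ph σ c x)^2 = (2*c*(σ+1))^(1/σ) * (w σ c x)^(-(1/σ)) := by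
  have hσ0 : σ ≠ 0 := by linarith
  have h1 : (ph σ c x)^2 = (uu σ c x)^(1/σ) := by
    unfold ph
    rw [← Real.rpow_natCast ((uu σ c x)^(1/(2*σ))) 2, ← Real.rpow_mul (uu_pos hσ1 hc x).le]
    congr 1
    push_cast
    field_simp
  rw [h1]
  unfold uu
  rw [Real.div_rpow (A_pos hσ1 hc).le (w_pos x).le, Real.rpow_neg (w_pos x).le, div_eq_mul_inv]

lemma uph (hσ1 : 1 < σ) (hc : 0 < c) (x : ℝ) :
    uu σ c x * (ph σ c x)^2 = (2*c*(σ+1))^(1/σ+1) * (w σ c x)^(-(1/σ+1)) := by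
  rw [ph_sq hσ1 hc x, Real.rpow_add_one (A_pos hσ1 hc).ne',
    show -(1/σ+1) = -(1/σ)+(-1) by ring, Real.rpow_add (w_pos x), Real.rpow_neg_one]
  unfold uu
  field_simp

theorem stmt13' (hσ : σ ∈ Set.Ioo (1:ℝ) 2) (hc : 0 < c) :
    (∀ x : ℝ, Spp σ c (Phi σ c) (fun y => Complex.I * deriv (Phi σ c) y) x
        = -((c^2/2 : ℝ) : ℂ) * (σ : ℂ) * ((‖Phi σ c x‖ ^ (2*σ) : ℝ) : ℂ) * Phi σ c x)
      ∧ (∫ x : ℝ, Spp σ c (Phi σ c) (fun y => Complex.I * deriv (Phi σ c) y) x *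
            (starRingEnd ℂ) (Complex.I * deriv (Phi σ c) x)).re
          = -(c^4/2) * (2 - σ) * σ * Mass σ c
      ∧ -(c^4/2) * (2 - σ) * σ * Mass σ c < 0 := by
  obtain ⟨hσ1, hσ2⟩ := hσ
  have hσ0 : σ ≠ 0 := by linarith
  have hσp : (0:ℝ) < σ := by linarith
  have hc0 : c ≠ 0 := hc.ne'
  have hB : (0:ℝ) < σ^2*c^2 := by positivity
  have hp : (1:ℝ)/2 < 1/σ := by
    rw [div_lt_div_iff₀ (by norm_num) hσp]; linarith
  have hp1 : (1:ℝ)/2 < 1/σ+1 := by linarith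
  have hA := A_pos hσ1 hc
  set A : ℝ := 2*c*(σ+1) with hAdef
  -- the real scalar integrals
  set J0 : ℝ := ∫ x : ℝ, (σ^2*c^2*x^2+1)^(-(1/σ)) with hJ0
  have hrec1 : (∫ x : ℝ, (σ^2*c^2*x^2+1)^(-(1/σ+1)))
      = ((2*(1/σ)-1)/(2*(1/σ))) * J0 := J_rec hB hp
  have hrec2 : (∫ x : ℝ, (σ^2*c^2*x^2+1)^(-(1/σ+1+1)))
      = ((2*(1/σ+1)-1)/(2*(1/σ+1))) * ∫ x : ℝ, (σ^2*c^2*x^2+1)^(-(1/σ+1)) := J_rec hB hp1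
  have hJ0pos : 0 < J0 := J_pos hB hp
  -- Mass
  have hmass : Mass σ c = 1/2 * (A^(1/σ) * J0) := by
    unfold Mass
    congr 1
    rw [show (fun x : ℝ => ‖Phi σ c x‖^2) = fun x : ℝ => A^(1/σ) * (σ^2*c^2*x^2+1)^(-(1/σ))
      from funext fun x => by
        rw [abs_Phi hσ1 hc, ph_sq hσ1 hc]; rfl]
    rw [integral_const_mul]
  have hApos : (0:ℝ) < A^(1/σ) := Real.rpow_pos_of_pos hA _
  have hmass_pos : 0 < Mass σ c := by
    rw [hmass]; positivity
  refine ⟨fun x => pointwise hσ1 hσ2 hc x, ?_, ?_⟩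
  · -- the integral identity
    set g1 : ℝ → ℝ := fun x => c^2/2*σ*(uu σ c x*(ph σ c x)^2*t1 σ c x) with hg1def
    set g2 : ℝ → ℝ := fun x => c^2/2*σ*(uu σ c x*(ph σ c x)^2*rr σ c x) with hg2def
    have hint_eq : (fun x : ℝ => Spp σ c (Phi σ c) (fun y => Complex.I * deriv (Phi σ c) y) x *
        (starRingEnd ℂ) (Complex.I * deriv (Phi σ c) x))
        = fun x : ℝ => ((g1 x : ℝ) : ℂ) + ((g2 x : ℝ) : ℂ) * Complex.I := by
      funext x
      have hE := EE_ne (σ := σ) (c := c) x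
      have heb : EE σ c x * (starRingEnd ℂ) (EE σ c x) = 1 := by
        rw [EE_conj, mul_inv_cancel₀ hE]
      rw [pointwise hσ1 hσ2 hc x, deriv_Phi hσ1 hc, abs_Phi_rpow hσ1 hc,
        map_mul, Complex.conj_I, conj_P1, show Phi σ c x = (ph σ c x : ℂ) * EE σ c x
          from by rw [Phi_eq hσ1 hc]]
      rw [hg1def, hg2def]
      simp only
      rw [show Qb σ c x = (rr σ c x : ℂ) - (t1 σ c x : ℂ)*Complex.I from rfl]
      push_cast
      linear_combination ((c^2/2 : ℂ)*(σ:ℂ)*(uu σ c x:ℂ)*((ph σ c x : ℂ))^2*Complex.I*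
          ((rr σ c x : ℂ) - (t1 σ c x : ℂ)*Complex.I)) * heb
        + (-(c^2/2 : ℂ)*(σ:ℂ)*(uu σ c x:ℂ)*((ph σ c x : ℂ))^2*(t1 σ c x : ℂ)) * Complex.I_sq
    -- pointwise forms of g1, g2
    have hsplit : ∀ x : ℝ, (w σ c x)^(-(1/σ+1+1)) = (w σ c x)^(-(1/σ+1)) * (w σ c x)⁻¹ := by
      intro x
      rw [← Real.rpow_neg_one (w σ c x), ← Real.rpow_add (w_pos x)]
      congr 1; ring
    have hg1eq : g1 = fun x : ℝ => (c^2/2*σ*(c/2)*A^(1/σ+1)) * (σ^2*c^2*x^2+1)^(-(1/σ+1))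
        + (-(c^2/2)*σ/(2*σ+2)*A^(1/σ+1)*A) * (σ^2*c^2*x^2+1)^(-(1/σ+1+1)) := by
      funext x
      rw [hg1def]
      simp only
      rw [uph hσ1 hc x]
      have hw := w_ne (σ := σ) (c := c) x
      have hwrfl : (σ^2*c^2*x^2+1 : ℝ) = w σ c x := rfl
      rw [hwrfl, hsplit x]
      unfold t1 uu
      rw [← hAdef]
      have h2σ : (2*σ+2) ≠ 0 := by linarith
      field_simp
      ring
    have hg2eq : g2 = fun x : ℝ => (-(c^2/2)*σ^2*c^2*A^(1/σ+1)) * (x * (σ^2*c^2*x^2+1)^(-(1/σ+1+1))) := by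
      funext x
      rw [hg2def]
      simp only
      rw [uph hσ1 hc x]
      have hw := w_ne (σ := σ) (c := c) x
      have hwrfl : (σ^2*c^2*x^2+1 : ℝ) = w σ c x := rfl
      rw [hwrfl, hsplit x]
      unfold rr
      rw [← hAdef]
      field_simp
    have hg1int : Integrable g1 := by
      rw [hg1eq]
      exact ((intJ hB hp1).const_mul _).add ((intJ hB (by linarith : (1:ℝ)/2 < 1/σ+1+1)).const_mul _)
    have hg2int : Integrable g2 := by
      rw [hg2eq]
      exact (intJx hB hp1).const_mul _
    rw [hint_eq]
    have i1 : Integrable (fun x : ℝ => ((g1 x : ℝ) : ℂ)) := by exact hg1int.ofReal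
    have i2 : Integrable (fun x : ℝ => ((g2 x : ℝ) : ℂ) * Complex.I) := by
      exact (hg2int.ofReal).mul_const _
    rw [integral_add i1 i2, integral_mul_const]
    rw [show (∫ x : ℝ, ((g1 x : ℝ):ℂ)) = ((∫ x : ℝ, g1 x : ℝ):ℂ) from integral_ofReal,
      show (∫ x : ℝ, ((g2 x : ℝ):ℂ)) = ((∫ x : ℝ, g2 x : ℝ):ℂ) from integral_ofReal]
    simp only [Complex.add_re, Complex.ofReal_re, Complex.mul_re, Complex.I_re, Complex.I_im,
      Complex.ofReal_im, mul_zero, zero_mul, sub_zero, mul_one, zero_sub, add_zero, mul_im]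
    -- now: ∫ g1 = target
    rw [hg1eq, integral_add ((intJ hB hp1).const_mul _)
      ((intJ hB (by linarith : (1:ℝ)/2 < 1/σ+1+1)).const_mul _),
      integral_const_mul, integral_const_mul, hrec2, hrec1, hmass]
    have hA1 : A^(1/σ+1) = A^(1/σ) * A := Real.rpow_add_one hA.ne' _
    rw [hA1, hAdef]
    field_simp
    ring
  · have h2σ : 0 < 2 - σ := by linarith
    have hpos : 0 < (c^4/2) * ((2-σ) * (σ * Mass σ c)) :=
      mul_pos (by positivity) (mul_pos h2σ (mul_pos hσp hmass_pos))
    nlinarith [hpos]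

end

end St13

theorem stmt13 (σ c : ℝ) (hσ : σ ∈ Set.Ioo (1:ℝ) 2) (hc : 0 < c) :
    (∀ x : ℝ, Spp σ c (Phi σ c) (fun y => Complex.I * deriv (Phi σ c) y) x
        = -((c^2/2 : ℝ) : ℂ) * (σ : ℂ) * ((‖Phi σ c x‖ ^ (2*σ) : ℝ) : ℂ) * Phi σ c x)
      ∧ (∫ x : ℝ, Spp σ c (Phi σ c) (fun y => Complex.I * deriv (Phi σ c) y) x *
            (starRingEnd ℂ) (Complex.I * deriv (Phi σ c) x)).re
          = -(c^4/2) * (2 - σ) * σ * Mass σ c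
      ∧ -(c^4/2) * (2 - σ) * σ * Mass σ c < 0 :=
  St13.stmt13' hσ hc
end
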